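/- Closure characterization of the TQC-achievable region: Let S, K, T be natural numbers, and let 𝒲 : Fin K → Finset (Fin (S+1)) and ℰ : Fin T → Finset (Fin (S+1)) be arbitrary set-valued maps. In the space of functions Δ : Fin (S+1) → ℝ, the closure of the set { Δ | ∃ l ∈ ℕ, l ≥ 1, ∃ N : Fin (S+1) → ℕ, (∀ s, Δ(s) = N(s)/l) and for all k ∈ Fin K, t ∈ Fin T: ∑_{s ∈ ℰ(t)} N(s) ≤ ∑_{s ∈ 𝒲(k)} N(s) − l } equals the polyhedron { Δ | (∀ s, Δ(s) ≥ 0) and for all k ∈ Fin K, t ∈ Fin T: ∑_{s ∈ 𝒲(k)} Δ(s) − ∑_{s ∈ ℰ(t)} Δ(s) ≥ 1 }. -/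
import Mathlib


/-- **Closure characterization of the TQC-achievable region.** In the space of
cost tuples `Δ : Fin (S+1) → ℝ`, the closure of the set of tuples achieved by
treating qudits as classical dits, i.e. tuples of the form `Δ s = N s / l` with
batch size `l ≥ 1` and integer counts `N` satisfying
`∑_{s ∈ ℰ t} N s ≤ ∑_{s ∈ 𝒲 k} N s − l` for all `k, t`, equals the polyhedron
`𝔇_TQC` of nonnegative tuples satisfying
`∑_{s ∈ 𝒲 k} Δ s − ∑_{s ∈ ℰ t} Δ s ≥ 1` for all `k, t`. -/
theorem closure_TQC_region
    (S K T : ℕ)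
    (𝒲 : Fin K → Finset (Fin (S + 1))) (ℰ : Fin T → Finset (Fin (S + 1))) :
    closure {Δ : Fin (S + 1) → ℝ |
        ∃ l : ℕ, 1 ≤ l ∧ ∃ N : Fin (S + 1) → ℕ,
          (∀ s, Δ s = (N s : ℝ) / (l : ℝ)) ∧
          ∀ (k : Fin K) (t : Fin T),
            (∑ s ∈ ℰ t, (N s : ℤ)) ≤ (∑ s ∈ 𝒲 k, (N s : ℤ)) - (l : ℤ)}
      = {Δ : Fin (S + 1) → ℝ |
          (∀ s, 0 ≤ Δ s) ∧
          ∀ (k : Fin K) (t : Fin T),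
            (∑ s ∈ 𝒲 k, Δ s) - ∑ s ∈ ℰ t, Δ s ≥ 1} := by
  set A : Set (Fin (S+1) → ℝ) := {Δ : Fin (S + 1) → ℝ |
        ∃ l : ℕ, 1 ≤ l ∧ ∃ N : Fin (S + 1) → ℕ,
          (∀ s, Δ s = (N s : ℝ) / (l : ℝ)) ∧
          ∀ (k : Fin K) (t : Fin T),
            (∑ s ∈ ℰ t, (N s : ℤ)) ≤ (∑ s ∈ 𝒲 k, (N s : ℤ)) - (l : ℤ)} with hA
  set P : Set (Fin (S+1) → ℝ) := {Δ : Fin (S + 1) → ℝ |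
          (∀ s, 0 ≤ Δ s) ∧
          ∀ (k : Fin K) (t : Fin T),
            (∑ s ∈ 𝒲 k, Δ s) - ∑ s ∈ ℰ t, Δ s ≥ 1} with hP
  have hPclosed : IsClosed P := by
    have : P = (⋂ s, {Δ : Fin (S+1) → ℝ | 0 ≤ Δ s}) ∩
        ⋂ (k : Fin K), ⋂ (t : Fin T),
          {Δ : Fin (S+1) → ℝ | 1 ≤ (∑ s ∈ 𝒲 k, Δ s) - ∑ s ∈ ℰ t, Δ s} := by
      ext Δ; simp [hP, Set.mem_iInter, forall_and, ge_iff_le]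
    rw [this]
    refine IsClosed.inter (isClosed_iInter fun s =>
      isClosed_le continuous_const (continuous_apply s)) ?_
    refine isClosed_iInter fun k => isClosed_iInter fun t =>
      isClosed_le continuous_const ?_
    exact Continuous.sub (continuous_finset_sum _ fun s _ => continuous_apply s)
      (continuous_finset_sum _ fun s _ => continuous_apply s)
  apply subset_antisymm
  · refine closure_minimal ?_ hPclosed
    rintro Δ ⟨l, hl, N, hΔ, hcon⟩
    have hlpos : (0:ℝ) < l := by exact_mod_cast hl
    constructor
    · intro s; rw [hΔ s]; positivity
    · intro k t
      have h := hcon k t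
      have h' : (∑ s ∈ ℰ t, (N s : ℝ)) + l ≤ ∑ s ∈ 𝒲 k, (N s : ℝ) := by
        exact_mod_cast (by linarith : (∑ s ∈ ℰ t, (N s : ℤ)) + l ≤ ∑ s ∈ 𝒲 k, (N s : ℤ))
      have e : ∀ (F : Finset (Fin (S+1))), ∑ s ∈ F, Δ s = (∑ s ∈ F, (N s : ℝ)) / l := by
        intro F; rw [Finset.sum_div]; exact Finset.sum_congr rfl fun s _ => hΔ s
      rw [ge_iff_le, e, e, div_sub_div_same, le_div_iff₀ hlpos]
      linarith
  · intro Δ hΔ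
    obtain ⟨hnn, hcon⟩ := hΔ
    -- approximating sequence
    set N : ℕ → Fin (S+1) → ℕ := fun n s => ⌈((n + S + 2 : ℕ) : ℝ) * Δ s⌉₊ with hN
    set f : ℕ → Fin (S+1) → ℝ := fun n s => (N n s : ℝ) / ((n + 1 : ℕ) : ℝ) with hf
    have hmem : ∀ n, f n ∈ A := by
      intro n
      refine ⟨n + 1, le_add_self, N n, fun s => rfl, ?_⟩
      intro k t
      have hm : (0:ℝ) < ((n + S + 2 : ℕ) : ℝ) := by positivity
      have hEle : (∑ s ∈ ℰ t, (N n s : ℝ)) ≤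
          ((n + S + 2 : ℕ) : ℝ) * (∑ s ∈ ℰ t, Δ s) + (S + 1) := by
        calc (∑ s ∈ ℰ t, (N n s : ℝ))
            ≤ ∑ s ∈ ℰ t, (((n + S + 2 : ℕ) : ℝ) * Δ s + 1) := by
              refine Finset.sum_le_sum fun s _ => ?_
              exact le_of_lt (Nat.ceil_lt_add_one (mul_nonneg (by positivity) (hnn s)))
          _ = ((n + S + 2 : ℕ) : ℝ) * (∑ s ∈ ℰ t, Δ s) + (ℰ t).card := by
              rw [Finset.sum_add_distrib, ← Finset.mul_sum, Finset.sum_const,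
                nsmul_eq_mul, mul_one]
          _ ≤ _ := by
              have : ((ℰ t).card : ℝ) ≤ (S + 1 : ℝ) := by
                have := Finset.card_le_univ (ℰ t)
                simp only [Finset.card_univ, Fintype.card_fin] at this
                exact_mod_cast this
              linarith
      have hWge : ((n + S + 2 : ℕ) : ℝ) * (∑ s ∈ 𝒲 k, Δ s) ≤
          ∑ s ∈ 𝒲 k, (N n s : ℝ) := by
        rw [Finset.mul_sum]
        exact Finset.sum_le_sum fun s _ => Nat.le_ceil _
      have hgap : (1:ℝ) ≤ (∑ s ∈ 𝒲 k, Δ s) - ∑ s ∈ ℰ t, Δ s := hcon k t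
      have hreal : (∑ s ∈ ℰ t, (N n s : ℝ)) + ((n + 1 : ℕ) : ℝ) ≤
          ∑ s ∈ 𝒲 k, (N n s : ℝ) := by
        have hgapm : ((n + S + 2 : ℕ) : ℝ) ≤
            ((n + S + 2 : ℕ) : ℝ) * (∑ s ∈ 𝒲 k, Δ s) -
              ((n + S + 2 : ℕ) : ℝ) * (∑ s ∈ ℰ t, Δ s) := by
          nlinarith [mul_nonneg hm.le (by linarith :
            (0:ℝ) ≤ ((∑ s ∈ 𝒲 k, Δ s) - ∑ s ∈ ℰ t, Δ s) - 1)]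
        have hmval : ((n + S + 2 : ℕ) : ℝ) = ((n + 1 : ℕ) : ℝ) + (S + 1 : ℝ) := by
          push_cast; ring
        linarith
      have : (∑ s ∈ ℰ t, (N n s : ℤ)) + ((n+1 : ℕ) : ℤ) ≤ ∑ s ∈ 𝒲 k, (N n s : ℤ) := by
        exact_mod_cast hreal
      linarith
    have htend : Filter.Tendsto f Filter.atTop (nhds Δ) := by
      rw [tendsto_pi_nhds]
      intro s
      have C : ℝ := (S + 1 : ℝ) * Δ s + 1
      have hzero : Filter.Tendsto
          (fun n : ℕ => ((S + 1 : ℝ) * Δ s + 1) / ((n + 1 : ℕ) : ℝ))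
          Filter.atTop (nhds 0) := by
        have h1 : Filter.Tendsto (fun n : ℕ => ((S + 1 : ℝ) * Δ s + 1) / (n : ℝ))
            Filter.atTop (nhds 0) := tendsto_const_div_atTop_nhds_zero_nat _
        exact h1.comp (Filter.tendsto_add_atTop_nat 1)
      have hupperlim : Filter.Tendsto
          (fun n : ℕ => Δ s + ((S + 1 : ℝ) * Δ s + 1) / ((n + 1 : ℕ) : ℝ))
          Filter.atTop (nhds (Δ s)) := by
        have := (tendsto_const_nhds (x := Δ s) (f := Filter.atTop (α := ℕ))).add hzero
        simpa using this
      refine tendsto_of_tendsto_of_tendsto_of_le_of_le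
        (tendsto_const_nhds (x := Δ s)) hupperlim ?_ ?_
      · intro n
        have hpos : (0:ℝ) < ((n + 1 : ℕ) : ℝ) := by positivity
        rw [hf, le_div_iff₀ hpos]
        have h1 : ((n + S + 2 : ℕ) : ℝ) * Δ s ≤ (N n s : ℝ) := Nat.le_ceil _
        have h2 : Δ s * ((n + 1 : ℕ) : ℝ) ≤ ((n + S + 2 : ℕ) : ℝ) * Δ s := by
          have : ((n + 1 : ℕ) : ℝ) ≤ ((n + S + 2 : ℕ) : ℝ) := by
            exact_mod_cast Nat.le_succ_of_le (by omega)
          nlinarith [hnn s]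
        linarith
      · intro n
        have hpos : (0:ℝ) < ((n + 1 : ℕ) : ℝ) := by positivity
        rw [hf, div_le_iff₀ hpos]
        have h1 : (N n s : ℝ) < ((n + S + 2 : ℕ) : ℝ) * Δ s + 1 :=
          Nat.ceil_lt_add_one (mul_nonneg (by positivity) (hnn s))
        have hmval : ((n + S + 2 : ℕ) : ℝ) = ((n + 1 : ℕ) : ℝ) + (S + 1 : ℝ) := by
          push_cast; ring
        rw [hmval] at h1
        have hcancel : (((S:ℝ) + 1) * Δ s + 1) / ((n + 1 : ℕ) : ℝ) * ((n + 1 : ℕ) : ℝ)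
            = ((S:ℝ) + 1) * Δ s + 1 := div_mul_cancel₀ _ (ne_of_gt hpos)
        nlinarith [hnn s, hcancel]
    exact mem_closure_of_tendsto htend (Filter.Eventually.of_forall hmem)
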